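/- Let J ⊆ ℝ be an interval, b : J → ℝ continuous, and x₁ : J → ℝ a differentiable solution of dx/dt = (t + x) + b(t)(1 + t + x)³ on J with x₁(t) ≠ −t−1 for all t ∈ J. Let k ∈ ℝ be such that h(t) := (x₁(t) + t + 1)^{−2} + k e^{−2t} > 0 for all t ∈ J. Then x(t) := h(t)^{−1/2} − t − 1 is differentiable and also solves dx/dt = (t + x) + b(t)(1 + t + x)³ on J. (This is the common time-dependent superposition rule x(t) = ((x₁(t)+t+1)^{−2} + k e^{−2t})^{−1/2} − t − 1 for the Lie family of Abel equations.) -/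

import Mathlib

/-- The common time-dependent superposition rule for the Lie family of Abel equations
`dx/dt = (t + x) + b(t)(1 + t + x)³`: if `x₁` is a solution on an interval `J` with
`x₁(t) ≠ −t−1`, and `k ∈ ℝ` is such that `h(t) = (x₁(t) + t + 1)^{−2} + k e^{−2t} > 0` on `J`,
then `x(t) = h(t)^{−1/2} − t − 1` is differentiable and is again a solution on `J`. -/
theorem abel_superposition_rule (J : Set ℝ) (hJ : J.OrdConnected)
    (b : ℝ → ℝ) (hb : ContinuousOn b J) (x₁ : ℝ → ℝ)
    (h₁ : ∀ t ∈ J, HasDerivWithinAt x₁ ((t + x₁ t) + b t * (1 + t + x₁ t) ^ 3) J t)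
    (hx₁ : ∀ t ∈ J, x₁ t ≠ -t - 1) (k : ℝ)
    (hk : ∀ t ∈ J, 0 < ((x₁ t + t + 1) ^ 2)⁻¹ + k * Real.exp (-2 * t)) :
    ∀ t ∈ J, HasDerivWithinAt
      (fun s => (Real.sqrt (((x₁ s + s + 1) ^ 2)⁻¹ + k * Real.exp (-2 * s)))⁻¹ - s - 1)
      ((t + ((Real.sqrt (((x₁ t + t + 1) ^ 2)⁻¹ + k * Real.exp (-2 * t)))⁻¹ - t - 1))
        + b t * (1 + t
          + ((Real.sqrt (((x₁ t + t + 1) ^ 2)⁻¹ + k * Real.exp (-2 * t)))⁻¹ - t - 1)) ^ 3)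
      J t := by
  intro t ht
  have hune : x₁ t + t + 1 ≠ 0 := by
    intro h; exact hx₁ t ht (by linarith)
  have hG : 0 < ((x₁ t + t + 1) ^ 2)⁻¹ + k * Real.exp (-2 * t) := hk t ht
  set G : ℝ := ((x₁ t + t + 1) ^ 2)⁻¹ + k * Real.exp (-2 * t) with hGdef
  -- derivative of u = x₁ s + s + 1
  have hu' : HasDerivWithinAt (fun s => x₁ s + s + 1)
      ((t + x₁ t) + b t * (1 + t + x₁ t) ^ 3 + 1) J t :=
    ((h₁ t ht).add (hasDerivWithinAt_id t J)).add_const 1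
  -- derivative of (u^2)⁻¹
  have hsq : HasDerivWithinAt (fun s => (x₁ s + s + 1) ^ 2)
      (2 * (x₁ t + t + 1) ^ 1 * ((t + x₁ t) + b t * (1 + t + x₁ t) ^ 3 + 1)) J t :=
    hu'.pow 2
  have hinv : HasDerivWithinAt (fun s => ((x₁ s + s + 1) ^ 2)⁻¹)
      (-(2 * (x₁ t + t + 1) ^ 1 * ((t + x₁ t) + b t * (1 + t + x₁ t) ^ 3 + 1))
        / ((x₁ t + t + 1) ^ 2) ^ 2) J t :=
    hsq.inv (pow_ne_zero 2 hune)
  have hexp : HasDerivWithinAt (fun s => k * Real.exp (-2 * s))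
      (k * (Real.exp (-2 * t) * -2)) J t := by
    have : HasDerivWithinAt (fun s : ℝ => -2 * s) (-2) J t := by
      simpa using (hasDerivWithinAt_id t J).const_mul (-2 : ℝ)
    exact (this.exp).const_mul k
  have hg : HasDerivWithinAt (fun s => ((x₁ s + s + 1) ^ 2)⁻¹ + k * Real.exp (-2 * s))
      (-2 * G - 2 * b t) J t := by
    have := hinv.add hexp
    convert this using 1
    any_goals first | rfl | skip
    rw [hGdef]
    field_simp
    ring
  have hsqrtpos : 0 < Real.sqrt G := Real.sqrt_pos.mpr hG
  have hsqrt : HasDerivWithinAt (fun s => Real.sqrt (((x₁ s + s + 1) ^ 2)⁻¹ + k * Real.exp (-2 * s)))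
      ((-2 * G - 2 * b t) / (2 * Real.sqrt G)) J t :=
    hg.sqrt hG.ne'
  have hinvsqrt : HasDerivWithinAt
      (fun s => (Real.sqrt (((x₁ s + s + 1) ^ 2)⁻¹ + k * Real.exp (-2 * s)))⁻¹)
      (-((-2 * G - 2 * b t) / (2 * Real.sqrt G)) / (Real.sqrt G) ^ 2) J t :=
    hsqrt.inv hsqrtpos.ne'
  have hfinal := (hinvsqrt.sub (hasDerivWithinAt_id t J)).sub_const 1
  convert hfinal using 1
  any_goals first | rfl | skip
  have hsq2 : Real.sqrt G ^ 2 = G := Real.sq_sqrt hG.le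
  set S : ℝ := Real.sqrt G with hS
  clear_value G
  clear_value S
  rw [← hsq2]
  have hSne : S ≠ 0 := hsqrtpos.ne'
  field_simp
  ring
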